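/- Let w be a word with period q which has a factor u with |u| ≥ q such that u has period r, where r divides q. Then w has period r. -/
import Mathlib


/-- If a word `w` of length `n` has period `q`, and a factor `w[a..a+m)` of length
`m ≥ q` has period `r` with `r ∣ q`, then `w` has period `r`. -/
theorem stmt_4 {α : Type*} (w : ℕ → α) (n q a m r : ℕ) (hq0 : 0 < q)
    (hq : ∀ i, i + q < n → w i = w (i + q))
    (hm : q ≤ m) (ham : a + m ≤ n)
    (hr : ∀ i, a ≤ i → i + r < a + m → w i = w (i + r))
    (hdvd : r ∣ q) :
    ∀ i, i + r < n → w i = w (i + r) := by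
  have hr0 : 0 < r := Nat.pos_of_dvd_of_pos hdvd hq0
  have hrq : r ≤ q := Nat.le_of_dvd hq0 hdvd
  -- chain of q-periods
  have chainq : ∀ k x, x + q * k < n → w x = w (x + q * k) := by
    intro k
    induction k with
    | zero => simp
    | succ k ih =>
      intro x hx
      rw [Nat.mul_succ] at hx ⊢
      have h1 : x + q < n := by omega
      calc w x = w (x + q) := hq x h1
        _ = w (x + q + q * k) := ih (x + q) (by omega)
        _ = w (x + (q * k + q)) := by congr 1; omega
  -- equality along congruence mod q
  have modq : ∀ x y, x ≤ y → y < n → x % q = y % q → w x = w y := by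
    intro x y hxy hy hmod
    obtain ⟨k, hk⟩ := (Nat.modEq_iff_dvd' hxy).mp hmod
    have hy' : y = x + q * k := by omega
    rw [hy']
    exact chainq k x (by omega)
  -- chain of r-periods inside the window
  have chainr : ∀ k x, a ≤ x → x + r * k < a + m → w x = w (x + r * k) := by
    intro k
    induction k with
    | zero => simp
    | succ k ih =>
      intro x hax hx
      rw [Nat.mul_succ] at hx ⊢
      have h1 : x + r < a + m := by omega
      calc w x = w (x + r) := hr x hax h1
        _ = w (x + r + r * k) := ih (x + r) (by omega) (by omega)
        _ = w (x + (r * k + r)) := by congr 1; omega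
  intro i hi
  have hin : i < n := by omega
  have hdm := Nat.div_add_mod a q
  have himq : i % q < q := Nat.mod_lt _ hq0
  have haq : a % q < q := Nat.mod_lt _ hq0
  set j0 := q * (a / q) + i % q with hj0
  set j := if j0 < a then j0 + q else j0 with hjdef
  obtain ⟨hja1, hja2⟩ : a ≤ j ∧ j < a + q := by
    by_cases h : j0 < a <;> simp [hjdef, h] <;> omega
  have hjmod : j % q = i % q := by
    have h0 : j0 % q = i % q := by
      rw [hj0, Nat.mul_add_mod]
      exact Nat.mod_mod_of_dvd _ dvd_rfl
    by_cases h : j0 < a <;> simp [hjdef, h, Nat.add_mod_right, h0]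
  have hjn : j < n := by omega
  have key1 : w i = w j := by
    rcases le_total i j with h | h
    · exact modq i j h hjn hjmod.symm
    · exact (modq j i h hin hjmod).symm
  have hjr_mod : (j + r) % q = (i + r) % q := by
    rw [Nat.add_mod, hjmod, ← Nat.add_mod]
  by_cases hcase : j + r < a + q
  · -- j + r stays inside [a, a+q)
    have key2 : w j = w (j + r) := hr j hja1 (by omega)
    have key3 : w (i + r) = w (j + r) := by
      rcases le_total (i + r) (j + r) with h | h
      · exact modq (i + r) (j + r) h (by omega) hjr_mod.symm
      · exact (modq (j + r) (i + r) h (by omega) hjr_mod).symm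
    rw [key1, key2, ← key3]
  · -- wrap around: j2 = j + r - q
    set j2 := j + r - q with hj2
    have hj2q : j2 + q = j + r := by omega
    have hj2mod : j2 % q = (i + r) % q := by
      rw [← Nat.add_mod_right j2 q, hj2q, hjr_mod]
    have hj2a : a ≤ j2 := by omega
    obtain ⟨k, hk⟩ : r ∣ q - r := (Nat.dvd_sub hdvd dvd_rfl)
    have hjj2 : j2 + r * k = j := by omega
    have key2 : w j2 = w j := by
      have := chainr k j2 hj2a (by omega)
      rwa [hjj2] at this
    have key3 : w (i + r) = w j2 := by
      rcases le_total (i + r) j2 with h | h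
      · exact modq (i + r) j2 h (by omega) hj2mod.symm
      · exact (modq j2 (i + r) h (by omega) hj2mod).symm
    rw [key1, ← key2, ← key3]
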